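/- Let m₁, m₂ be basic probability assignments on a finite nonempty set Θ with D₁ > 0 and D₂ > 0, where Nᵢ = ∑_{A⊆Θ, |A|>1} mᵢ(A) and Dᵢ = ∑_{A⊆Θ, |A|>1} |A|·mᵢ(A), and let βᵢ = Nᵢ/Dᵢ. Define the cross transforms p[Bel₂,Bel₁](x) = m₂(x) + β₁·(Pl₂(x) − m₂(x)) and p[Bel₁,Bel₂](x) = m₁(x) + β₂·(Pl₁(x) − m₁(x)), and T(x) = (D₁·p[Bel₂,Bel₁](x) + D₂·p[Bel₁,Bel₂](x))/(D₁ + D₂). Then for every α₁ ∈ [0,1] with α₂ = 1 − α₁ and every x ∈ Θ, the intersection probability of the affine combination α₁m₁ + α₂m₂ satisfies p[α₁Bel₁ + α₂Bel₂](x) = ( α₁D₁·(α₁·p[Bel₁](x) + α₂·T(x)) + α₂D₂·(α₁·T(x) + α₂·p[Bel₂](x)) ) / (α₁D₁ + α₂D₂). -/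
import Mathlib


open Finset

/-- A basic probability assignment on a finite set `Θ`. -/
def IsBPA {Θ : Type*} [Fintype Θ] (m : Finset Θ → ℝ) : Prop :=
  m ∅ = 0 ∧ (∀ A, 0 ≤ m A) ∧ (∑ A : Finset Θ, m A) = 1

/-- Belief function `Bel(A) = ∑_{B ⊆ A} m(B)`. -/
noncomputable def Bel {Θ : Type*} [Fintype Θ] [DecidableEq Θ] (m : Finset Θ → ℝ)
    (A : Finset Θ) : ℝ :=
  ∑ B ∈ A.powerset, m B

/-- Plausibility function `Pl(A) = ∑_{B ∩ A ≠ ∅} m(B)`. -/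
noncomputable def Pl {Θ : Type*} [Fintype Θ] [DecidableEq Θ] (m : Finset Θ → ℝ)
    (A : Finset Θ) : ℝ :=
  ∑ B ∈ Finset.univ.filter (fun B => B ∩ A ≠ ∅), m B

/-- Total mass of singletons `k_Bel`. -/
noncomputable def kBel {Θ : Type*} [Fintype Θ] (m : Finset Θ → ℝ) : ℝ :=
  ∑ x : Θ, m {x}

/-- Total plausibility of singletons `k_Pl`. -/
noncomputable def kPl {Θ : Type*} [Fintype Θ] [DecidableEq Θ] (m : Finset Θ → ℝ) : ℝ :=
  ∑ x : Θ, Pl m {x}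

/-- `β[Bel] = (1 - k_Bel)/(k_Pl - k_Bel)`. -/
noncomputable def betaBel {Θ : Type*} [Fintype Θ] [DecidableEq Θ] (m : Finset Θ → ℝ) : ℝ :=
  (1 - kBel m) / (kPl m - kBel m)

/-- The intersection probability `p[Bel](x) = m(x) + β[Bel]⬝(Pl(x) - m(x))`. -/
noncomputable def pInt {Θ : Type*} [Fintype Θ] [DecidableEq Θ] (m : Finset Θ → ℝ)
    (x : Θ) : ℝ :=
  m {x} + betaBel m * (Pl m {x} - m {x})

/-- `N = ∑_{|A| > 1} m(A)`, total mass of non-singleton focal elements. -/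
noncomputable def bigN {Θ : Type*} [Fintype Θ] (m : Finset Θ → ℝ) : ℝ :=
  ∑ A ∈ Finset.univ.filter (fun A : Finset Θ => 1 < A.card), m A

/-- `D = ∑_{|A| > 1} |A|⬝m(A)`. -/
noncomputable def bigD {Θ : Type*} [Fintype Θ] (m : Finset Θ → ℝ) : ℝ :=
  ∑ A ∈ Finset.univ.filter (fun A : Finset Θ => 1 < A.card), (A.card : ℝ) * m A

/-- `β = N/D`. -/
noncomputable def betaND {Θ : Type*} [Fintype Θ] (m : Finset Θ → ℝ) : ℝ :=
  bigN m / bigD m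

/-- Intersection probability `p[Bel](x) = m(x) + β⬝(Pl(x) - m(x))` with `β = N/D`. -/
noncomputable def pIntND {Θ : Type*} [Fintype Θ] [DecidableEq Θ]
    (m : Finset Θ → ℝ) (x : Θ) : ℝ :=
  m {x} + betaND m * (Pl m {x} - m {x})

/-- Cross transform `p[Bel₁,Bel₂](x) = m₁(x) + β[Bel₂]⬝(Pl₁(x) - m₁(x))`. -/
noncomputable def crossP {Θ : Type*} [Fintype Θ] [DecidableEq Θ]
    (m₁ m₂ : Finset Θ → ℝ) (x : Θ) : ℝ :=
  m₁ {x} + betaND m₂ * (Pl m₁ {x} - m₁ {x})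

/-- The probability `T[Bel₁,Bel₂](x) = (D₁⬝p[Bel₂,Bel₁](x) + D₂⬝p[Bel₁,Bel₂](x))/(D₁+D₂)`. -/
noncomputable def crossT {Θ : Type*} [Fintype Θ] [DecidableEq Θ]
    (m₁ m₂ : Finset Θ → ℝ) (x : Θ) : ℝ :=
  (bigD m₁ * crossP m₂ m₁ x + bigD m₂ * crossP m₁ m₂ x) / (bigD m₁ + bigD m₂)

/-- Theorem 8: the intersection probability of an affine combination
`α₁Bel₁ + α₂Bel₂` decomposes through the cross probability `T[Bel₁,Bel₂]`. -/
theorem pInt_of_affine_combination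
    {Θ : Type*} [Fintype Θ] [DecidableEq Θ] [Nonempty Θ]
    (m₁ m₂ : Finset Θ → ℝ) (hm₁ : IsBPA m₁) (hm₂ : IsBPA m₂)
    (hD₁ : 0 < bigD m₁) (hD₂ : 0 < bigD m₂)
    (α₁ α₂ : ℝ) (hα₁ : 0 ≤ α₁) (hα₁' : α₁ ≤ 1) (hα : α₂ = 1 - α₁) (x : Θ) :
    pIntND (fun A => α₁ * m₁ A + α₂ * m₂ A) x =
      (α₁ * bigD m₁ * (α₁ * pIntND m₁ x + α₂ * crossT m₁ m₂ x) +
          α₂ * bigD m₂ * (α₁ * crossT m₁ m₂ x + α₂ * pIntND m₂ x)) /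
        (α₁ * bigD m₁ + α₂ * bigD m₂) := by
  have hα₂ : 0 ≤ α₂ := by rw [hα]; linarith
  have hPl : Pl (fun A => α₁ * m₁ A + α₂ * m₂ A) {x}
      = α₁ * Pl m₁ {x} + α₂ * Pl m₂ {x} := by
    simp [Pl, Finset.sum_add_distrib, Finset.mul_sum]
  have hN : bigN (fun A => α₁ * m₁ A + α₂ * m₂ A)
      = α₁ * bigN m₁ + α₂ * bigN m₂ := by
    simp [bigN, Finset.sum_add_distrib, Finset.mul_sum]
  have hD : bigD (fun A => α₁ * m₁ A + α₂ * m₂ A)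
      = α₁ * bigD m₁ + α₂ * bigD m₂ := by
    simp [bigD, Finset.sum_add_distrib, Finset.mul_sum, mul_add]
    congr 1 <;> apply Finset.sum_congr rfl <;> intro A _ <;> ring
  have hDpos : 0 < α₁ * bigD m₁ + α₂ * bigD m₂ := by
    rcases eq_or_lt_of_le hα₁ with h | h
    · rw [← h] at hα ⊢
      nlinarith
    · nlinarith [mul_pos h hD₁, mul_nonneg hα₂ hD₂.le]
  simp only [pIntND, betaND, crossT, crossP, hPl, hN, hD]
  have h12 : bigD m₁ + bigD m₂ ≠ 0 := by positivity
  field_simp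
  ring
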